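/- arXiv:0712.2892 — 3 statements merged into one kernel-verified Lean document; each statement's English description precedes it below -/
import Mathlib

section
/- As w ranges over ℝ₊^n, there are only finitely many distinct initial ideals in_{<_w}(I) of a fixed ideal I ⊆ K[x₁,…,xₙ]; equivalently, a fixed ideal I admits only finitely many distinct monomial initial ideals over all term orders. -/
open MvPolynomial

noncomputable def wdeg {σ : Type*} [Fintype σ] (w : σ → ℝ) (a : σ →₀ ℕ) : ℝ :=
  ∑ i, w i * (a i : ℝ)

open scoped Classical in
noncomputable def initialForm {K : Type*} [CommRing K] {σ : Type*} [Fintype σ]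
    (w : σ → ℝ) (f : MvPolynomial σ K) : MvPolynomial σ K :=
  ∑ a ∈ f.support.filter (fun a => ∀ b ∈ f.support, wdeg w b ≤ wdeg w a),
    monomial a (f.coeff a)

noncomputable def initialIdeal {K : Type*} [CommRing K] {σ : Type*} [Fintype σ]
    (w : σ → ℝ) (I : Ideal (MvPolynomial σ K)) : Ideal (MvPolynomial σ K) :=
  Ideal.span (initialForm w '' (I : Set (MvPolynomial σ K)))

def IsTermOrder {σ : Type*} (lt : (σ →₀ ℕ) → (σ →₀ ℕ) → Prop) : Prop :=
  Transitive lt ∧ Irreflexive lt ∧ (∀ a b, a = b ∨ lt a b ∨ lt b a) ∧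
    (∀ a, a ≠ 0 → lt 0 a) ∧ (∀ a b c, lt a b → lt (a + c) (b + c))

def ltW {σ : Type*} [Fintype σ] (w : σ → ℝ) (lt : (σ →₀ ℕ) → (σ →₀ ℕ) → Prop)
    (a b : σ →₀ ℕ) : Prop :=
  wdeg w a < wdeg w b ∨ (wdeg w a = wdeg w b ∧ lt a b)

def IsLeadExp {K : Type*} [CommRing K] {σ : Type*}
    (lt : (σ →₀ ℕ) → (σ →₀ ℕ) → Prop) (f : MvPolynomial σ K) (a : σ →₀ ℕ) : Prop :=
  a ∈ f.support ∧ ∀ b ∈ f.support, b ≠ a → lt b a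

noncomputable def leadTermIdeal {K : Type*} [CommRing K] {σ : Type*}
    (lt : (σ →₀ ℕ) → (σ →₀ ℕ) → Prop) (I : Ideal (MvPolynomial σ K)) :
    Ideal (MvPolynomial σ K) :=
  Ideal.span {m | ∃ f ∈ I, f ≠ 0 ∧ ∃ a, IsLeadExp lt f a ∧ m = monomial a (f.coeff a)}

def IsGB {K : Type*} [CommRing K] {σ : Type*} (lt : (σ →₀ ℕ) → (σ →₀ ℕ) → Prop)
    (I : Ideal (MvPolynomial σ K)) (G : Finset (MvPolynomial σ K)) : Prop :=
  (↑G : Set (MvPolynomial σ K)) ⊆ ↑I ∧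
    leadTermIdeal lt I =
      Ideal.span {m | ∃ g ∈ G, ∃ a, IsLeadExp lt g a ∧ m = monomial a (g.coeff a)}

def IsReducedGB {K : Type*} [CommRing K] {σ : Type*} (lt : (σ →₀ ℕ) → (σ →₀ ℕ) → Prop)
    (I : Ideal (MvPolynomial σ K)) (G : Finset (MvPolynomial σ K)) : Prop :=
  IsGB lt I G ∧ (∀ g ∈ G, g ≠ 0) ∧
    (∀ g ∈ G, ∀ a, IsLeadExp lt g a → g.coeff a = 1) ∧
    (∀ g ∈ G, ∀ h ∈ G, g ≠ h → ∀ a, IsLeadExp lt g a → ∀ b ∈ h.support, ¬ (∀ i, a i ≤ b i))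

def IsMonomialIdeal {K : Type*} [CommRing K] {σ : Type*}
    (J : Ideal (MvPolynomial σ K)) : Prop :=
  ∃ S : Set (σ →₀ ℕ), J = Ideal.span ((fun a => monomial a (1 : K)) '' S)

namespace TOaux

variable {σ : Type*} {lt : (σ →₀ ℕ) → (σ →₀ ℕ) → Prop}

lemma asymm (h : IsTermOrder lt) {a b : σ →₀ ℕ} (h1 : lt a b) (h2 : lt b a) : False :=
  h.2.1 a (h.1 h1 h2)

lemma le_lt (h : IsTermOrder lt) {a b : σ →₀ ℕ} (hab : a ≤ b) (hne : a ≠ b) : lt a b := by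
  obtain ⟨c, rfl⟩ := le_iff_exists_add.mp hab
  have hc : c ≠ 0 := by rintro rfl; simp at hne
  have := h.2.2.2.2 0 c a (h.2.2.2.1 c hc)
  simpa [add_comm] using this

lemma exists_max (h : IsTermOrder lt) (S : Finset (σ →₀ ℕ)) (hS : S.Nonempty) :
    ∃ m ∈ S, ∀ d ∈ S, d ≠ m → lt d m := by
  classical
  induction S using Finset.induction_on with
  | empty => simp at hS
  | @insert a S ha ih =>
    rcases S.eq_empty_or_nonempty with rfl | hS'
    · exact ⟨a, by simp, by simp⟩
    · obtain ⟨m, hmS, hm⟩ := ih hS'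
      rcases h.2.2.1 a m with heq | hlt | hlt
      · subst heq
        exact ⟨a, Finset.mem_insert_self a S, fun d hd hdm => hm d (by
          rcases Finset.mem_insert.mp hd with rfl | hd
          · exact absurd rfl hdm
          · exact hd) hdm⟩
      · refine ⟨m, Finset.mem_insert_of_mem hmS, fun d hd hdm => ?_⟩
        rcases Finset.mem_insert.mp hd with rfl | hd
        · exact hlt
        · exact hm d hd hdm
      · refine ⟨a, Finset.mem_insert_self a S, fun d hd hda => ?_⟩
        rcases Finset.mem_insert.mp hd with rfl | hd
        · exact absurd rfl hda
        · rcases h.2.2.1 d m with rfl | h1 | h1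
          · exact hlt
          · exact h.1 h1 hlt
          · exact absurd (hm d hd (fun hdm => h.2.1 m (hdm ▸ h1))) (fun h2 => asymm h h1 h2)

lemma wf {n : ℕ} {lt : (Fin n →₀ ℕ) → (Fin n →₀ ℕ) → Prop} (h : IsTermOrder lt) :
    WellFounded lt := by
  haveI : IsIrrefl (Fin n →₀ ℕ) lt := ⟨h.2.1⟩
  haveI : IsTrans (Fin n →₀ ℕ) lt := ⟨fun a b c hab hbc => h.1 hab hbc⟩
  haveI : IsStrictOrder (Fin n →₀ ℕ) lt := ⟨⟩
  rw [RelEmbedding.wellFounded_iff_isEmpty]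
  constructor
  intro e
  obtain ⟨m, k, hmk, hle⟩ := (Set.isPWO_of_wellQuasiOrderedLE (Set.univ : Set (Fin n →₀ ℕ))).exists_lt (f := fun i => e i)
    (fun i => Set.mem_univ _)
  have hdesc : lt (e k) (e m) := e.map_rel_iff.mpr hmk
  rcases eq_or_ne (e m) (e k) with heq | hne
  · exact h.2.1 _ (heq ▸ hdesc)
  · exact asymm h (le_lt h hle hne) hdesc

end TOaux

namespace StmtSix

open MvPolynomial

variable {K : Type*} [Field K] {n : ℕ}

noncomputable def JL (L : List (MvPolynomial (Fin n) K × (Fin n →₀ ℕ))) :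
    Ideal (MvPolynomial (Fin n) K) :=
  Ideal.span ((fun a => monomial a (1 : K)) '' {a | ∃ p ∈ L, p.2 = a})

def Ords (I : Ideal (MvPolynomial (Fin n) K))
    (L : List (MvPolynomial (Fin n) K × (Fin n →₀ ℕ))) :
    Set ((Fin n →₀ ℕ) → (Fin n →₀ ℕ) → Prop) :=
  {lt | IsTermOrder lt ∧ ∀ p ∈ L, IsLeadExp lt p.1 p.2}

def InvL (I : Ideal (MvPolynomial (Fin n) K))
    (L : List (MvPolynomial (Fin n) K × (Fin n →₀ ℕ))) : Prop :=
  (∀ p ∈ L, p.1 ∈ I) ∧ List.Pairwise (fun p q => ¬ p.2 ≤ q.2) L ∧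
    ((fun lt => leadTermIdeal lt I) '' Ords I L).Infinite

lemma mem_JL_iff {L : List (MvPolynomial (Fin n) K × (Fin n →₀ ℕ))}
    {b : Fin n →₀ ℕ} {c : K} (hc : c ≠ 0) :
    (monomial b c : MvPolynomial (Fin n) K) ∈ JL L ↔ ∃ p ∈ L, p.2 ≤ b := by
  classical
  rw [JL, mem_ideal_span_monomial_image]
  rw [support_monomial, if_neg hc]
  constructor
  · intro h
    obtain ⟨si, ⟨p, hp, rfl⟩, hle⟩ := h b (Finset.mem_singleton_self b)
    exact ⟨p, hp, hle⟩
  · rintro ⟨p, hp, hle⟩ xi hxi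
    rw [Finset.mem_singleton] at hxi
    subst hxi
    exact ⟨p.2, ⟨p, hp, rfl⟩, hle⟩

lemma JL_le_lead {I : Ideal (MvPolynomial (Fin n) K)}
    {L : List (MvPolynomial (Fin n) K × (Fin n →₀ ℕ))}
    (hI : ∀ p ∈ L, p.1 ∈ I) {lt} (hlt : lt ∈ Ords I L) :
    JL L ≤ leadTermIdeal lt I := by
  rw [JL, Ideal.span_le]
  rintro x ⟨a, ⟨p, hp, rfl⟩, rfl⟩
  have hle : IsLeadExp lt p.1 p.2 := hlt.2 p hp
  have hc : p.1.coeff p.2 ≠ 0 := mem_support_iff.mp hle.1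
  have hp0 : p.1 ≠ 0 := by
    intro h0; apply hc; simp [h0]
  have hmem : (monomial p.2 (p.1.coeff p.2) : MvPolynomial (Fin n) K) ∈ leadTermIdeal lt I :=
    Ideal.subset_span ⟨p.1, hI p hp, hp0, p.2, hle, rfl⟩
  have : (monomial p.2 (1 : K) : MvPolynomial (Fin n) K)
      = C (p.1.coeff p.2)⁻¹ * monomial p.2 (p.1.coeff p.2) := by
    rw [C_mul_monomial, inv_mul_cancel₀ hc]
  show (monomial p.2 (1 : K) : MvPolynomial (Fin n) K) ∈ leadTermIdeal lt I
  rw [this]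
  exact Ideal.mul_mem_left _ _ hmem

lemma reduce (I : Ideal (MvPolynomial (Fin n) K)) {lt} (hlt : IsTermOrder lt)
    (L : List (MvPolynomial (Fin n) K × (Fin n →₀ ℕ)))
    (hI : ∀ p ∈ L, p.1 ∈ I) (hL : ∀ p ∈ L, IsLeadExp lt p.1 p.2)
    (b : Fin n →₀ ℕ) :
    ∀ f ∈ I, (∀ d ∈ f.support, (∃ p ∈ L, p.2 ≤ d) → (lt d b ∨ d = b)) →
      ∃ f' ∈ I, (∀ d ∈ f'.support, ¬ ∃ p ∈ L, p.2 ≤ d) ∧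
        (∀ d, ¬ lt d b → d ≠ b → f'.coeff d = f.coeff d) ∧
        ((¬ ∃ p ∈ L, p.2 ≤ b) → f'.coeff b = f.coeff b) := by
  classical
  refine WellFounded.induction (TOaux.wf hlt)
    (C := fun b => ∀ f ∈ I, (∀ d ∈ f.support, (∃ p ∈ L, p.2 ≤ d) → (lt d b ∨ d = b)) →
      ∃ f' ∈ I, (∀ d ∈ f'.support, ¬ ∃ p ∈ L, p.2 ≤ d) ∧
        (∀ d, ¬ lt d b → d ≠ b → f'.coeff d = f.coeff d) ∧
        ((¬ ∃ p ∈ L, p.2 ≤ b) → f'.coeff b = f.coeff b)) b ?_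
  clear b
  intro b IH f hf hsupp
  rcases (f.support.filter (fun d => ∃ p ∈ L, p.2 ≤ d)).eq_empty_or_nonempty with hBS | hBS
  · refine ⟨f, hf, fun d hd hbad => ?_, fun d _ _ => rfl, fun _ => rfl⟩
    have : d ∈ f.support.filter (fun d => ∃ p ∈ L, p.2 ≤ d) := Finset.mem_filter.mpr ⟨hd, hbad⟩
    rw [hBS] at this
    exact absurd this (Finset.notMem_empty d)
  · obtain ⟨m, hmBS, hmmax⟩ := TOaux.exists_max hlt _ hBS
    obtain ⟨hmsupp, hmbad⟩ := Finset.mem_filter.mp hmBS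
    rcases hsupp m hmsupp hmbad with hmb | heq
    · -- the maximal bad monomial is strictly below b : recurse at m
      obtain ⟨f', hf'I, hf'nb, hf'ag, _⟩ := IH m hmb f hf (fun d hd hbad => by
        rcases eq_or_ne d m with rfl | hdm
        · exact Or.inr rfl
        · exact Or.inl (hmmax d (Finset.mem_filter.mpr ⟨hd, hbad⟩) hdm))
      refine ⟨f', hf'I, hf'nb, fun d hdb hdnb => ?_, fun hbnb => ?_⟩
      · refine hf'ag d (fun hdm => hdb (hlt.1 hdm hmb)) ?_
        rintro rfl; exact hdb hmb
      · refine hf'ag b (fun hbm => TOaux.asymm hlt hbm hmb) ?_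
        rintro rfl; exact hbnb hmbad
    · -- m = b : perform one reduction step at b
      have hbsupp : b ∈ f.support := heq ▸ hmsupp
      have hbbad : ∃ p ∈ L, p.2 ≤ b := heq ▸ hmbad
      obtain ⟨p, hpL, hple⟩ := hbbad
      have hga : IsLeadExp lt p.1 p.2 := hL p hpL
      have hgc : p.1.coeff p.2 ≠ 0 := mem_support_iff.mp hga.1
      have hfb : f.coeff b ≠ 0 := mem_support_iff.mp hbsupp
      set c : Fin n →₀ ℕ := b - p.2 with hc
      have hcb : c + p.2 = b := tsub_add_cancel_of_le hple
      set u : K := f.coeff b / p.1.coeff p.2 with hu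
      have hu0 : u ≠ 0 := div_ne_zero hfb hgc
      set f₂ : MvPolynomial (Fin n) K := f - monomial c u * p.1 with hf₂
      have key1 : ∀ d, (monomial c u * p.1).coeff d ≠ 0 → ∃ e ∈ p.1.support, d = c + e := by
        intro d hd
        have hd' : d ∈ (monomial c u * p.1).support := mem_support_iff.mpr hd
        have := support_mul (monomial c u) p.1 hd'
        rw [support_monomial, if_neg hu0] at this
        obtain ⟨x, hx, e, he, rfl⟩ := Finset.mem_add.mp this
        simp only [Finset.mem_singleton] at hx
        exact ⟨e, he, by rw [hx]⟩
      have key2 : (monomial c u * p.1).coeff b = f.coeff b := by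
        rw [← hcb, coeff_monomial_mul, hu, div_mul_cancel₀ _ hgc, hcb]
      have key3 : ∀ d, ¬ lt d b → d ≠ b → (monomial c u * p.1).coeff d = 0 := by
        intro d hdb hdnb
        by_contra h0
        obtain ⟨e, he, rfl⟩ := key1 d h0
        rcases eq_or_ne e p.2 with rfl | hne
        · exact hdnb hcb
        · have := hlt.2.2.2.2 e p.2 c (hga.2 e he hne)
          rw [add_comm e c, add_comm p.2 c, hcb] at this
          exact hdb this
      have hf₂I : f₂ ∈ I := I.sub_mem hf (I.mul_mem_left _ (hI p hpL))
      have hf₂b : f₂.coeff b = 0 := by rw [hf₂, coeff_sub, key2, sub_self]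
      have hagree : ∀ d, ¬ lt d b → d ≠ b → f₂.coeff d = f.coeff d := by
        intro d hdb hdnb
        rw [hf₂, coeff_sub, key3 d hdb hdnb, sub_zero]
      have hsupp₂ : ∀ d ∈ f₂.support, (∃ p ∈ L, p.2 ≤ d) → lt d b := by
        intro d hd hbad
        by_contra hdb
        rcases eq_or_ne d b with rfl | hdnb
        · exact (mem_support_iff.mp hd) hf₂b
        · have hdf : d ∈ f.support := mem_support_iff.mpr (by
            rw [← hagree d hdb hdnb]; exact mem_support_iff.mp hd)
          rcases hsupp d hdf hbad with h1 | h1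
          · exact hdb h1
          · exact hdnb h1
      rcases (f₂.support.filter (fun d => ∃ p ∈ L, p.2 ≤ d)).eq_empty_or_nonempty with hBS₂ | hBS₂
      · refine ⟨f₂, hf₂I, fun d hd hbad => ?_, hagree, fun hbnb => absurd ⟨p, hpL, hple⟩ hbnb⟩
        have : d ∈ f₂.support.filter (fun d => ∃ p ∈ L, p.2 ≤ d) :=
          Finset.mem_filter.mpr ⟨hd, hbad⟩
        rw [hBS₂] at this
        exact absurd this (Finset.notMem_empty d)
      · obtain ⟨m₂, hm₂BS, hm₂max⟩ := TOaux.exists_max hlt _ hBS₂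
        obtain ⟨hm₂supp, hm₂bad⟩ := Finset.mem_filter.mp hm₂BS
        have hm₂b : lt m₂ b := hsupp₂ m₂ hm₂supp hm₂bad
        obtain ⟨f', hf'I, hf'nb, hf'ag, _⟩ := IH m₂ hm₂b f₂ hf₂I (fun d hd hbad => by
          rcases eq_or_ne d m₂ with rfl | hdm
          · exact Or.inr rfl
          · exact Or.inl (hm₂max d (Finset.mem_filter.mpr ⟨hd, hbad⟩) hdm))
        refine ⟨f', hf'I, hf'nb, fun d hdb hdnb => ?_, fun hbnb => absurd ⟨p, hpL, hple⟩ hbnb⟩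
        rw [hf'ag d (fun hdm => hdb (hlt.1 hdm hm₂b)) (by rintro rfl; exact hdb hm₂b)]
        exact hagree d hdb hdnb

lemma step (I : Ideal (MvPolynomial (Fin n) K))
    (L : List (MvPolynomial (Fin n) K × (Fin n →₀ ℕ))) (h : InvL I L) :
    ∃ p, InvL I (L ++ [p]) := by
  classical
  obtain ⟨hI, hPW, hInf⟩ := h
  obtain ⟨T, hT, T', hT', hTT'⟩ := hInf.nontrivial
  have hex : ∃ lt ∈ Ords I L, leadTermIdeal lt I ≠ JL L := by
    rcases eq_or_ne T (JL L) with rfl | hne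
    · obtain ⟨lt, hlt, hlt'⟩ := hT'
      exact ⟨lt, hlt, fun hh => hTT' (((hlt' : leadTermIdeal lt I = T').symm.trans hh).symm)⟩
    · obtain ⟨lt, hlt, hlt'⟩ := hT
      exact ⟨lt, hlt, fun hh => hne ((hlt' : leadTermIdeal lt I = T).symm.trans hh)⟩
  obtain ⟨lt, hltO, hne⟩ := hex
  have hto : IsTermOrder lt := hltO.1
  have hJle : JL L ≤ leadTermIdeal lt I := JL_le_lead hI hltO
  have hnotle : ¬ leadTermIdeal lt I ≤ JL L := fun hle => hne (le_antisymm hle hJle)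
  have hexgen : ∃ m ∈ {m | ∃ f ∈ I, f ≠ 0 ∧
      ∃ a, IsLeadExp lt f a ∧ m = monomial a (f.coeff a)}, m ∉ JL L := by
    by_contra hall
    push_neg at hall
    refine hnotle ?_
    rw [leadTermIdeal]
    exact Ideal.span_le.mpr fun x hx => hall x hx
  obtain ⟨mm, ⟨f, hfI, hf0, bb, hlead, rfl⟩, hmnot⟩ := hexgen
  have hfbb : f.coeff bb ≠ 0 := mem_support_iff.mp hlead.1
  have hbad : ¬ ∃ p ∈ L, p.2 ≤ bb := fun hb => hmnot ((mem_JL_iff hfbb).mpr hb)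
  obtain ⟨f', hf'I, hf'nb, _, hf'bb⟩ := reduce I hto L hI (fun p hp => hltO.2 p hp) bb f hfI
    (fun d hd _ => by
      rcases eq_or_ne d bb with rfl | hdb
      · exact Or.inr rfl
      · exact Or.inl (hlead.2 d hd hdb))
  have hf'coeff : f'.coeff bb ≠ 0 := by rw [hf'bb hbad]; exact hfbb
  have hf'0 : f' ≠ 0 := fun h0 => hf'coeff (by simp [h0])
  have hsplit : ∃ a ∈ f'.support,
      ((fun lt => leadTermIdeal lt I) '' Ords I (L ++ [(f', a)])).Infinite := by
    by_contra hfin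
    push_neg at hfin
    apply hInf
    refine Set.Finite.subset (Set.Finite.biUnion f'.support.finite_toSet
      (fun a ha => hfin a ha)) ?_
    rintro T ⟨lt', hlt', rfl⟩
    obtain ⟨a, ha, hamax⟩ := TOaux.exists_max hlt'.1 f'.support (by
      rw [Finset.nonempty_iff_ne_empty]
      simpa [MvPolynomial.support_eq_empty] using hf'0)
    refine Set.mem_biUnion ha ⟨lt', ⟨hlt'.1, ?_⟩, rfl⟩
    intro q hq
    rcases List.mem_append.mp hq with hq | hq
    · exact hlt'.2 q hq
    · rw [List.mem_singleton] at hq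
      subst hq
      exact ⟨ha, hamax⟩
  obtain ⟨a, ha, hainf⟩ := hsplit
  refine ⟨(f', a), ?_, ?_, hainf⟩
  · intro q hq
    rcases List.mem_append.mp hq with hq | hq
    · exact hI q hq
    · rw [List.mem_singleton] at hq; subst hq; exact hf'I
  · rw [List.pairwise_append]
    refine ⟨hPW, List.pairwise_singleton _ _, ?_⟩
    intro x hx y hy
    rw [List.mem_singleton] at hy; subst hy
    exact fun hle => hf'nb a ha ⟨x, hx, hle⟩

end StmtSix

/-- A fixed ideal `I` has only finitely many distinct (monomial) initial ideals as the
term order varies; in particular only finitely many initial ideals `in_{<_w}(I)` occur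
as `w` ranges over `ℝ₊ⁿ`. -/
theorem stmt6 {K : Type*} [Field K] {n : ℕ} (I : Ideal (MvPolynomial (Fin n) K)) :
    {J : Ideal (MvPolynomial (Fin n) K) |
      ∃ lt : (Fin n →₀ ℕ) → (Fin n →₀ ℕ) → Prop, IsTermOrder lt ∧ J = leadTermIdeal lt I}.Finite := by
  classical
  by_contra hfin
  have hinf : ((fun lt => leadTermIdeal lt I) '' StmtSix.Ords I []).Infinite := by
    have hset : {J : Ideal (MvPolynomial (Fin n) K) |
        ∃ lt, IsTermOrder lt ∧ J = leadTermIdeal lt I}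
        = (fun lt => leadTermIdeal lt I) '' StmtSix.Ords I [] := by
      ext J
      simp [StmtSix.Ords, eq_comm]
    rw [hset] at hfin
    exact hfin
  have h0 : StmtSix.InvL I [] := ⟨by simp, List.Pairwise.nil, hinf⟩
  let F : {L : List (MvPolynomial (Fin n) K × (Fin n →₀ ℕ)) // StmtSix.InvL I L} →
      {L : List (MvPolynomial (Fin n) K × (Fin n →₀ ℕ)) // StmtSix.InvL I L} := fun S =>
    ⟨S.1 ++ [Classical.choose (StmtSix.step I S.1 S.2)],
      Classical.choose_spec (StmtSix.step I S.1 S.2)⟩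
  let seq : ℕ → {L : List (MvPolynomial (Fin n) K × (Fin n →₀ ℕ)) // StmtSix.InvL I L} :=
    fun k => F^[k] ⟨[], h0⟩
  have hseq : ∀ k, seq (k+1) = F (seq k) := fun k => Function.iterate_succ_apply' F k _
  have hstrict : ∀ k, StmtSix.JL (K := K) (seq k).1 < StmtSix.JL (seq (k+1)).1 := by
    intro k
    rw [hseq k]
    have hinv : StmtSix.InvL I ((seq k).1 ++ [Classical.choose (StmtSix.step I (seq k).1 (seq k).2)]) :=
      Classical.choose_spec (StmtSix.step I (seq k).1 (seq k).2)
    set L := (seq k).1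
    set q := Classical.choose (StmtSix.step I L (seq k).2) with hq
    have hle : StmtSix.JL L ≤ StmtSix.JL (L ++ [q]) := by
      apply Ideal.span_mono
      apply Set.image_mono
      rintro a ⟨p, hp, rfl⟩
      exact ⟨p, List.mem_append_left _ hp, rfl⟩
    refine lt_of_le_of_ne hle ?_
    intro heq
    have hmem : (MvPolynomial.monomial q.2 (1:K)) ∈ StmtSix.JL (L ++ [q]) :=
      Ideal.subset_span ⟨q.2, ⟨q, by simp, rfl⟩, rfl⟩
    rw [← heq] at hmem
    obtain ⟨p, hp, hple⟩ := (StmtSix.mem_JL_iff one_ne_zero).mp hmem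
    have hpw := List.pairwise_append.mp hinv.2.1
    exact hpw.2.2 p hp q (List.mem_singleton_self q) hple
  have hmono : Monotone (fun k => StmtSix.JL (K := K) (seq k).1) :=
    monotone_nat_of_le_succ fun k => (hstrict k).le
  obtain ⟨N, hN⟩ := monotone_stabilizes_iff_noetherian.mpr inferInstance
    ⟨fun k => StmtSix.JL (K := K) (seq k).1, hmono⟩
  exact (hstrict N).ne (hN (N+1) (Nat.le_succ N))
end

section
/- Fix an ideal I ⊆ K[x₁,…,xₙ], a term order <, and a weight w ∈ ℝ₊^n such that in_w(I) = in_{<_w}(I) is a monomial ideal. Let G be the reduced Gröbner basis of I with respect to <_w. Then the I-equivalence class of w equals the relatively open convex polyhedral cone c[w] = { w' ∈ ℝ^n : in_{w'}(g) = in_w(g) for all g ∈ G }. -/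
open MvPolynomial

section Aux

theorem exists_rel_max' {α : Type*} {r : α → α → Prop} (htr : Transitive r)
    (htri : ∀ a b, a = b ∨ r a b ∨ r b a) {s : Finset α} (hs : s.Nonempty) :
    ∃ a ∈ s, ∀ b ∈ s, b ≠ a → r b a := by
  classical
  induction s using Finset.induction with
  | empty => exact absurd hs (by simp)
  | @insert x s hx ih =>
    rcases s.eq_empty_or_nonempty with rfl | hs'
    · exact ⟨x, by simp, by simp⟩
    · obtain ⟨m, hm, hmax⟩ := ih hs'
      rcases htri x m with heq | hxm | hmx
      · refine ⟨m, by simp [hm], fun b hb hbm => ?_⟩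
        rcases Finset.mem_insert.1 hb with rfl | hb
        · exact absurd heq hbm
        · exact hmax b hb hbm
      · refine ⟨m, by simp [hm], fun b hb hbm => ?_⟩
        rcases Finset.mem_insert.1 hb with rfl | hb
        · exact hxm
        · exact hmax b hb hbm
      · refine ⟨x, by simp, fun b hb hbx => ?_⟩
        rcases Finset.mem_insert.1 hb with rfl | hb
        · exact absurd rfl hbx
        · rcases eq_or_ne b m with rfl | hbm
          · exact hmx
          · exact htr (hmax b hb hbm) hmx

variable {σ : Type*} [Fintype σ]

theorem wdeg_add (w : σ → ℝ) (a b : σ →₀ ℕ) : wdeg w (a + b) = wdeg w a + wdeg w b := by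
  simp [wdeg, Finsupp.add_apply, Nat.cast_add, mul_add, Finset.sum_add_distrib]

theorem wdeg_zero (w : σ → ℝ) : wdeg w (0 : σ →₀ ℕ) = 0 := by simp [wdeg]

theorem wdeg_nonneg {w : σ → ℝ} (hw : ∀ i, 0 ≤ w i) (a : σ →₀ ℕ) : 0 ≤ wdeg w a :=
  Finset.sum_nonneg fun i _ => mul_nonneg (hw i) (Nat.cast_nonneg _)

section TermOrder

variable {lt : (σ →₀ ℕ) → (σ →₀ ℕ) → Prop} {w : σ → ℝ}

theorem ltW_trans (hlt : IsTermOrder lt) : Transitive (ltW w lt) := by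
  rintro a b c (h1 | ⟨h1, h1'⟩) (h2 | ⟨h2, h2'⟩)
  · exact Or.inl (h1.trans h2)
  · exact Or.inl (h2 ▸ h1)
  · exact Or.inl (h1 ▸ h2)
  · exact Or.inr ⟨h1.trans h2, hlt.1 h1' h2'⟩

theorem ltW_irrefl (hlt : IsTermOrder lt) : Irreflexive (ltW w lt) := by
  rintro a (h | ⟨h, h'⟩)
  · exact lt_irrefl _ h
  · exact hlt.2.1 a h'

theorem ltW_trichot (hlt : IsTermOrder lt) :
    ∀ a b, a = b ∨ ltW w lt a b ∨ ltW w lt b a := by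
  intro a b
  rcases lt_trichotomy (wdeg w a) (wdeg w b) with h | h | h
  · exact Or.inr (Or.inl (Or.inl h))
  · rcases hlt.2.2.1 a b with rfl | h' | h'
    · exact Or.inl rfl
    · exact Or.inr (Or.inl (Or.inr ⟨h, h'⟩))
    · exact Or.inr (Or.inr (Or.inr ⟨h.symm, h'⟩))
  · exact Or.inr (Or.inr (Or.inl h))

theorem ltW_add (hlt : IsTermOrder lt) (a b c : σ →₀ ℕ) (h : ltW w lt a b) :
    ltW w lt (a + c) (b + c) := by
  rcases h with h | ⟨h, h'⟩
  · exact Or.inl (by rw [wdeg_add, wdeg_add]; linarith)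
  · exact Or.inr ⟨by rw [wdeg_add, wdeg_add, h], hlt.2.2.2.2 a b c h'⟩

theorem ltW_of_le (hlt : IsTermOrder lt) (hw : ∀ i, 0 ≤ w i) {a b : σ →₀ ℕ}
    (h : a ≤ b) : a = b ∨ ltW w lt a b := by
  obtain ⟨c, rfl⟩ := le_iff_exists_add.1 h
  rcases eq_or_ne c 0 with rfl | hc
  · exact Or.inl (by simp)
  · refine Or.inr ?_
    rcases eq_or_lt_of_le (wdeg_nonneg hw c) with hc0 | hc0
    · refine Or.inr ⟨by rw [wdeg_add, ← hc0, add_zero], ?_⟩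
      have := hlt.2.2.2.2 0 c a (hlt.2.2.2.1 c hc)
      simpa [add_comm] using this
    · exact Or.inl (by rw [wdeg_add]; linarith)

theorem ltW_wf [Finite σ] (hlt : IsTermOrder lt) (hw : ∀ i, 0 ≤ w i) :
    WellFounded (ltW w lt) := by
  haveI : IsStrictOrder (σ →₀ ℕ) (ltW w lt) :=
    { irrefl := ltW_irrefl hlt, trans := fun _ _ _ h1 h2 => ltW_trans hlt h1 h2 }
  rw [RelEmbedding.wellFounded_iff_isEmpty]
  refine ⟨fun f => ?_⟩
  obtain ⟨m, k, hmk, hle⟩ := (wellQuasiOrdered_le (α := σ →₀ ℕ)) f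
  have hdesc : ltW w lt (f k) (f m) := f.map_rel_iff.2 hmk
  rcases ltW_of_le hlt hw hle with heq | hlt'
  · exact ltW_irrefl hlt (f k) (heq ▸ hdesc)
  · exact ltW_irrefl hlt (f m) (ltW_trans hlt hlt' hdesc)

end TermOrder

section Poly

variable {K : Type*} [CommRing K] [Nontrivial K]

theorem mem_monomialSpan_iff {S : Set (σ →₀ ℕ)} {p : MvPolynomial σ K} :
    p ∈ Ideal.span ((fun a => MvPolynomial.monomial a (1 : K)) '' S) ↔
      ∀ b ∈ p.support, ∃ s ∈ S, s ≤ b := by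
  classical
  constructor
  · intro hp
    refine Submodule.span_induction ?_ ?_ ?_ ?_ hp
    · rintro x ⟨s, hs, rfl⟩ b hb
      rw [MvPolynomial.support_monomial] at hb
      rw [if_neg (one_ne_zero (α := K)), Finset.mem_singleton] at hb
      exact ⟨s, hs, hb ▸ le_rfl⟩
    · simp
    · intro x y _ _ hx hy b hb
      rcases Finset.mem_union.1 (MvPolynomial.support_add hb) with h | h
      · exact hx b h
      · exact hy b h
    · intro a x _ hx b hb
      rw [smul_eq_mul] at hb
      obtain ⟨u, hu, v, hv, rfl⟩ := Finset.mem_add.1 (MvPolynomial.support_mul _ _ hb)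
      obtain ⟨s, hs, hsv⟩ := hx v hv
      exact ⟨s, hs, hsv.trans (le_add_self)⟩
  · intro h
    rw [p.as_sum]
    refine Ideal.sum_mem _ fun b hb => ?_
    obtain ⟨s, hs, hsb⟩ := h b hb
    have : (MvPolynomial.monomial b (MvPolynomial.coeff b p) : MvPolynomial σ K) =
        MvPolynomial.monomial (b - s) (MvPolynomial.coeff b p) * MvPolynomial.monomial s 1 := by
      rw [MvPolynomial.monomial_mul, mul_one, tsub_add_cancel_of_le hsb]
    rw [this]
    exact Ideal.mul_mem_left _ _ (Ideal.subset_span ⟨s, hs, rfl⟩)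

open scoped Classical in
theorem coeff_initialForm (w : σ → ℝ) (f : MvPolynomial σ K) (b : σ →₀ ℕ) :
    MvPolynomial.coeff b (initialForm w f) =
      if b ∈ f.support.filter (fun a => ∀ c ∈ f.support, wdeg w c ≤ wdeg w a)
      then MvPolynomial.coeff b f else 0 := by
  rw [initialForm, MvPolynomial.coeff_sum]
  simp only [MvPolynomial.coeff_monomial]
  rw [Finset.sum_ite_eq' _ b (fun a => MvPolynomial.coeff a f)]

open scoped Classical in
theorem support_initialForm (w : σ → ℝ) (f : MvPolynomial σ K) :
    (initialForm w f).support =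
      f.support.filter (fun a => ∀ c ∈ f.support, wdeg w c ≤ wdeg w a) := by
  ext b
  rw [MvPolynomial.mem_support_iff, coeff_initialForm]
  split_ifs with h
  · simp only [h, iff_true]
    exact MvPolynomial.mem_support_iff.1 (Finset.mem_filter.1 h).1
  · exact iff_of_false (by simp) h

open scoped Classical in
theorem initialForm_support_nonempty (w : σ → ℝ) {f : MvPolynomial σ K} (hf : f ≠ 0) :
    (initialForm w f).support.Nonempty := by
  rw [support_initialForm]
  obtain ⟨b, hb, hmax⟩ := f.support.exists_max_image (wdeg w)
    (MvPolynomial.support_nonempty.2 hf)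
  exact ⟨b, Finset.mem_filter.2 ⟨hb, hmax⟩⟩

theorem leadExp_exists {r : (σ →₀ ℕ) → (σ →₀ ℕ) → Prop} (htr : Transitive r)
    (htri : ∀ a b, a = b ∨ r a b ∨ r b a) {f : MvPolynomial σ K} (hf : f ≠ 0) :
    ∃ a, IsLeadExp r f a := by
  obtain ⟨a, ha, hmax⟩ := exists_rel_max' htr htri (MvPolynomial.support_nonempty.2 hf)
  exact ⟨a, ha, hmax⟩

theorem leadExp_unique {r : (σ →₀ ℕ) → (σ →₀ ℕ) → Prop} (htr : Transitive r)
    (hirr : Irreflexive r) {f : MvPolynomial σ K} {a a' : σ →₀ ℕ}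
    (h : IsLeadExp r f a) (h' : IsLeadExp r f a') : a = a' := by
  by_contra hne
  exact hirr a (htr (h'.2 a h.1 hne) (h.2 a' h'.1 (Ne.symm hne)))

end Poly

end Aux

theorem initialForm_mem_initialIdeal {K : Type*} [CommRing K] {σ : Type*} [Fintype σ]
    (w : σ → ℝ) {I : Ideal (MvPolynomial σ K)} {g : MvPolynomial σ K} (hg : g ∈ I) :
    initialForm w g ∈ initialIdeal w I :=
  Ideal.subset_span ⟨g, hg, rfl⟩

/-- If `in_w(I) = in_{<_w}(I)` is a monomial ideal and `G` is the reduced Gröbner basis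
of `I` with respect to `<_w`, then the `I`-equivalence class of `w` is the cone
`c[w] = {w' : in_{w'}(g) = in_w(g) for all g ∈ G}`. -/
theorem stmt7 {K : Type*} [Field K] {n : ℕ} (I : Ideal (MvPolynomial (Fin n) K))
    (w : Fin n → ℝ) (hw : ∀ i, 0 ≤ w i)
    (lt : (Fin n →₀ ℕ) → (Fin n →₀ ℕ) → Prop) (hlt : IsTermOrder lt)
    (hmonEq : initialIdeal w I = leadTermIdeal (ltW w lt) I)
    (hmon : IsMonomialIdeal (initialIdeal w I))
    (G : Finset (MvPolynomial (Fin n) K)) (hG : IsReducedGB (ltW w lt) I G) :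
    {w' : Fin n → ℝ | initialIdeal w' I = initialIdeal w I} =
      {w' : Fin n → ℝ | ∀ g ∈ G, initialForm w' g = initialForm w g} := by
  classical
  obtain ⟨⟨hGsub, hGspan⟩, hGne, hGcoeff, hGred⟩ := hG
  have htr := ltW_trans (w := w) hlt
  have hirr := ltW_irrefl (w := w) hlt
  have htri := ltW_trichot (w := w) hlt
  have hex : ∀ g ∈ G, ∃ a, IsLeadExp (ltW w lt) g a := fun g hg =>
    leadExp_exists htr htri (hGne g hg)
  choose! A hA using hex
  have hAuniq : ∀ g ∈ G, ∀ a, IsLeadExp (ltW w lt) g a → a = A g := fun g hg a ha =>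
    leadExp_unique htr hirr ha (hA g hg)
  set M : Ideal (MvPolynomial (Fin n) K) :=
    Ideal.span ((fun a => monomial a (1 : K)) '' (A '' ↑G)) with hMdef
  have hMmem : ∀ p : MvPolynomial (Fin n) K,
      p ∈ M ↔ ∀ b ∈ p.support, ∃ g ∈ G, A g ≤ b := by
    intro p
    rw [hMdef, mem_monomialSpan_iff]
    constructor
    · intro h b hb
      obtain ⟨s, ⟨g, hg, rfl⟩, hsb⟩ := h b hb
      exact ⟨g, hg, hsb⟩
    · intro h b hb
      obtain ⟨g, hg, hgb⟩ := h b hb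
      exact ⟨A g, ⟨g, hg, rfl⟩, hgb⟩
  have hM2 : leadTermIdeal (ltW w lt) I = M := by
    rw [hGspan, hMdef]
    congr 1
    ext m
    constructor
    · rintro ⟨g, hg, a, ha, rfl⟩
      refine ⟨A g, ⟨g, hg, rfl⟩, ?_⟩
      rw [hGcoeff g hg a ha, hAuniq g hg a ha]
    · rintro ⟨a, ⟨g, hg, rfl⟩, rfl⟩
      exact ⟨g, hg, A g, hA g hg, by rw [hGcoeff g hg (A g) (hA g hg)]⟩
  have hM1 : initialIdeal w I = M := hmonEq.trans hM2
  have hC : ∀ g ∈ G, ∀ b ∈ g.support, ∀ h ∈ G, A h ≤ b → b = A g := by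
    intro g hg b hb h hh hle
    by_cases hgh : h = g
    · subst hgh
      rcases eq_or_ne b (A h) with rfl | hne
      · rfl
      · rcases ltW_of_le hlt hw hle with heq | hlt'
        · exact (hne heq.symm).elim
        · exact ((hirr _ (htr hlt' ((hA h hh).2 b hb hne)))).elim
    · exact absurd (Finsupp.le_def.1 hle) (hGred h hh g hg hgh (A h) (hA h hh) b hb)
  have hD : ∀ (u : Fin n → ℝ), ∀ g ∈ G, initialForm u g ∈ M →
      initialForm u g = monomial (A g) 1 := by
    intro u g hg hmem
    have hsub : ∀ b ∈ (initialForm u g).support, b = A g := by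
      intro b hb
      obtain ⟨h, hh, hle⟩ := (hMmem _).1 hmem b hb
      have hbg : b ∈ g.support := by
        rw [support_initialForm] at hb
        exact (Finset.mem_filter.1 hb).1
      exact hC g hg b hbg h hh hle
    have hne := initialForm_support_nonempty u (hGne g hg)
    have hAin : A g ∈ (initialForm u g).support := by
      obtain ⟨b, hb⟩ := hne
      rwa [hsub b hb] at hb
    have hsupp : (initialForm u g).support = {A g} :=
      Finset.eq_singleton_iff_unique_mem.2 ⟨hAin, hsub⟩
    have hfilt := hsupp
    rw [support_initialForm] at hfilt
    apply MvPolynomial.ext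
    intro b
    rw [coeff_initialForm, MvPolynomial.coeff_monomial]
    rcases eq_or_ne b (A g) with rfl | hb
    · rw [if_pos (by rw [hfilt]; exact Finset.mem_singleton_self _), if_pos rfl]
      exact hGcoeff g hg _ (hA g hg)
    · rw [if_neg (by rw [hfilt, Finset.mem_singleton]; exact hb),
        if_neg (fun h => hb h.symm)]
  have hinw : ∀ g ∈ G, initialForm w g = monomial (A g) 1 := fun g hg =>
    hD w g hg (by rw [← hM1]; exact initialForm_mem_initialIdeal w (hGsub hg))
  ext w'
  simp only [Set.mem_setOf_eq]
  constructor
  · intro hEq g hg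
    rw [hinw g hg]
    exact hD w' g hg
      (by rw [← hM1, ← hEq]; exact initialForm_mem_initialIdeal w' (hGsub hg))
  · intro hcone
    have hcone' : ∀ g ∈ G, initialForm w' g = monomial (A g) 1 := fun g hg => by
      rw [hcone g hg, hinw g hg]
    have hstrict : ∀ g ∈ G, ∀ e ∈ g.support, e ≠ A g →
        wdeg w' e < wdeg w' (A g) := by
      intro g hg e he hne
      have hsupp : (initialForm w' g).support = {A g} := by
        rw [hcone' g hg, MvPolynomial.support_monomial, if_neg (one_ne_zero (α := K))]
      have hfilt := hsupp
      rw [support_initialForm] at hfilt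
      have hAmem : A g ∈ g.support.filter
          (fun a => ∀ c ∈ g.support, wdeg w' c ≤ wdeg w' a) := by
        rw [hfilt]; exact Finset.mem_singleton_self _
      have hAmax := (Finset.mem_filter.1 hAmem).2
      rcases lt_or_eq_of_le (hAmax e he) with h | h
      · exact h
      · exfalso
        apply hne
        have hemem : e ∈ g.support.filter
            (fun a => ∀ c ∈ g.support, wdeg w' c ≤ wdeg w' a) :=
          Finset.mem_filter.2 ⟨he, fun c hc => by rw [h]; exact hAmax c hc⟩
        rw [hfilt, Finset.mem_singleton] at hemem
        exact hemem
    rw [hM1]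
    refine le_antisymm ?_ ?_
    · refine Ideal.span_le.2 ?_
      rintro m ⟨f, hfI, rfl⟩
      rw [SetLike.mem_coe]
      by_contra hnotin
      obtain ⟨b₀, hb₀supp, hb₀std⟩ : ∃ b ∈ (initialForm w' f).support,
          ¬ ∃ g ∈ G, A g ≤ b := by
        by_contra hall
        push_neg at hall
        exact hnotin ((hMmem _).2 hall)
      have hb₀f : b₀ ∈ f.support ∧ ∀ c ∈ f.support, wdeg w' c ≤ wdeg w' b₀ := by
        rw [support_initialForm] at hb₀supp
        exact Finset.mem_filter.1 hb₀supp
      have hfI' : f ∈ I := hfI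
      have RED : ∀ b : Fin n →₀ ℕ, ∀ p : MvPolynomial (Fin n) K, p ∈ I →
          (∀ e ∈ p.support, wdeg w' e ≤ wdeg w' b₀) → MvPolynomial.coeff b₀ p ≠ 0 →
          (∀ e ∈ p.support, (∃ g ∈ G, A g ≤ e) → e = b ∨ ltW w lt e b) →
          ∃ r ∈ I, MvPolynomial.coeff b₀ r ≠ 0 ∧
            ∀ e ∈ r.support, ¬ ∃ g ∈ G, A g ≤ e := by
        intro b
        refine (ltW_wf hlt hw).induction
          (C := fun b => ∀ p : MvPolynomial (Fin n) K, p ∈ I →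
            (∀ e ∈ p.support, wdeg w' e ≤ wdeg w' b₀) → MvPolynomial.coeff b₀ p ≠ 0 →
            (∀ e ∈ p.support, (∃ g ∈ G, A g ≤ e) → e = b ∨ ltW w lt e b) →
            ∃ r ∈ I, MvPolynomial.coeff b₀ r ≠ 0 ∧
              ∀ e ∈ r.support, ¬ ∃ g ∈ G, A g ≤ e) b ?_
        clear b
        intro b IH p hpI hpW hpb₀ hpcmp
        by_cases hMs : ∃ e ∈ p.support, ∃ g ∈ G, A g ≤ e
        · obtain ⟨e₀, he₀, hd₀⟩ := hMs
          have hMsne : (p.support.filter (fun e => ∃ g ∈ G, A g ≤ e)).Nonempty :=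
            ⟨e₀, Finset.mem_filter.2 ⟨he₀, hd₀⟩⟩
          obtain ⟨b₁, hb₁Ms, hb₁max⟩ := exists_rel_max' htr htri hMsne
          have hb₁supp : b₁ ∈ p.support := (Finset.mem_filter.1 hb₁Ms).1
          obtain ⟨g, hg, hgle⟩ := (Finset.mem_filter.1 hb₁Ms).2
          have hb₁eq : b₁ - A g + A g = b₁ := tsub_add_cancel_of_le hgle
          have hcne : MvPolynomial.coeff b₁ p ≠ 0 := MvPolynomial.mem_support_iff.1 hb₁supp
          set c' : Fin n →₀ ℕ := b₁ - A g with hc'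
          have hb₁eq' : c' + A g = b₁ := hb₁eq
          have hc'le : c' ≤ b₁ := le_iff_exists_add.2 ⟨A g, hb₁eq'.symm⟩
          set q := p - monomial c' (MvPolynomial.coeff b₁ p) * g with hqdef
          have hqI : q ∈ I := I.sub_mem hpI (I.mul_mem_left _ (hGsub hg))
          have hcoeffq : ∀ e, MvPolynomial.coeff e q = MvPolynomial.coeff e p -
              (if c' ≤ e then MvPolynomial.coeff b₁ p * MvPolynomial.coeff (e - c') g
               else 0) := by
            intro e
            rw [hqdef, MvPolynomial.coeff_sub, MvPolynomial.coeff_monomial_mul']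
          have hb₁A : b₁ - c' = A g := by rw [← hb₁eq', add_tsub_cancel_left]
          have hb₁q : MvPolynomial.coeff b₁ q = 0 := by
            rw [hcoeffq, if_pos hc'le, hb₁A, hGcoeff g hg (A g) (hA g hg), mul_one, sub_self]
          have hnew : ∀ e ∈ q.support, e ≠ b₁ ∧ (e ∈ p.support ∨
              ∃ e' ∈ g.support, e' ≠ A g ∧ e = c' + e') := by
            intro e he
            have hce := MvPolynomial.mem_support_iff.1 he
            have hne : e ≠ b₁ := by rintro rfl; exact hce hb₁q
            refine ⟨hne, ?_⟩
            by_cases hp : e ∈ p.support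
            · exact Or.inl hp
            · refine Or.inr ?_
              have h0 : MvPolynomial.coeff e p = 0 := MvPolynomial.notMem_support_iff.1 hp
              rw [hcoeffq, h0, zero_sub, neg_ne_zero] at hce
              by_cases hle : c' ≤ e
              · rw [if_pos hle] at hce
                have hg' : MvPolynomial.coeff (e - c') g ≠ 0 :=
                  fun h => hce (by rw [h, mul_zero])
                have heq : c' + (e - c') = e := by
                  rw [add_comm]; exact tsub_add_cancel_of_le hle
                refine ⟨e - c', MvPolynomial.mem_support_iff.2 hg', ?_, heq.symm⟩
                intro hEA
                exact hne (by rw [← heq, hEA, hb₁eq'])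
              · rw [if_neg hle] at hce; exact absurd rfl hce
          have hb₁W : wdeg w' b₁ ≤ wdeg w' b₀ := hpW b₁ hb₁supp
          have hnewW : ∀ e' ∈ g.support, e' ≠ A g →
              wdeg w' (c' + e') < wdeg w' b₁ := by
            intro e' he' hne'
            have := hstrict g hg e' he' hne'
            rw [← hb₁eq', wdeg_add, wdeg_add]
            linarith
          have hqW : ∀ e ∈ q.support, wdeg w' e ≤ wdeg w' b₀ := by
            intro e he
            rcases (hnew e he).2 with hp | ⟨e', he', hne', rfl⟩
            · exact hpW e hp
            · exact le_of_lt (lt_of_lt_of_le (hnewW e' he' hne') hb₁W)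
          have hqb₀ : MvPolynomial.coeff b₀ q ≠ 0 := by
            have hzero : (if c' ≤ b₀ then
                MvPolynomial.coeff b₁ p * MvPolynomial.coeff (b₀ - c') g else 0) = 0 := by
              by_cases hle : c' ≤ b₀
              · rw [if_pos hle]
                by_cases hgz : MvPolynomial.coeff (b₀ - c') g = 0
                · rw [hgz, mul_zero]
                · exfalso
                  have hsup : b₀ - c' ∈ g.support := MvPolynomial.mem_support_iff.2 hgz
                  rcases eq_or_ne (b₀ - c') (A g) with hEA | hEA
                  · exact hb₀std ⟨g, hg, hEA ▸ tsub_le_self⟩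
                  · have h1 := hnewW _ hsup hEA
                    have h2 : c' + (b₀ - c') = b₀ := by
                      rw [add_comm]; exact tsub_add_cancel_of_le hle
                    rw [h2] at h1
                    linarith
              · rw [if_neg hle]
            rw [hcoeffq, hzero, sub_zero]
            exact hpb₀
          have hqcmp : ∀ e ∈ q.support, (∃ g' ∈ G, A g' ≤ e) → ltW w lt e b₁ := by
            intro e he hd
            rcases hnew e he with ⟨hne, hp | ⟨e', he', hne', rfl⟩⟩
            · exact hb₁max e (Finset.mem_filter.2 ⟨hp, hd⟩) hne
            · have h1 : ltW w lt e' (A g) := (hA g hg).2 e' he' hne'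
              have h2 := ltW_add hlt e' (A g) c' h1
              rw [add_comm e' c', add_comm (A g) c', hb₁eq'] at h2
              exact h2
          have hb₁b : b₁ = b ∨ ltW w lt b₁ b := hpcmp b₁ hb₁supp ⟨g, hg, hgle⟩
          by_cases hMs' : ∃ e ∈ q.support, ∃ g' ∈ G, A g' ≤ e
          · obtain ⟨e₁, he₁, hd₁⟩ := hMs'
            have hMsne' : (q.support.filter (fun e => ∃ g' ∈ G, A g' ≤ e)).Nonempty :=
              ⟨e₁, Finset.mem_filter.2 ⟨he₁, hd₁⟩⟩
            obtain ⟨b₂, hb₂Ms, hb₂max⟩ := exists_rel_max' htr htri hMsne'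
            have hb₂supp : b₂ ∈ q.support := (Finset.mem_filter.1 hb₂Ms).1
            have hb₂b₁ : ltW w lt b₂ b₁ := hqcmp b₂ hb₂supp (Finset.mem_filter.1 hb₂Ms).2
            have hb₂b : ltW w lt b₂ b := by
              rcases hb₁b with rfl | h
              · exact hb₂b₁
              · exact htr hb₂b₁ h
            refine IH b₂ hb₂b q hqI hqW hqb₀ ?_
            intro e he hd
            rcases eq_or_ne e b₂ with rfl | hne
            · exact Or.inl rfl
            · exact Or.inr (hb₂max e (Finset.mem_filter.2 ⟨he, hd⟩) hne)
          · exact ⟨q, hqI, hqb₀, fun e he hd => hMs' ⟨e, he, hd⟩⟩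
        · exact ⟨p, hpI, hpb₀, fun e he hd => hMs ⟨e, he, hd⟩⟩
      obtain ⟨r, hrI, hrb₀, hrstd⟩ : ∃ r ∈ I, MvPolynomial.coeff b₀ r ≠ 0 ∧
          ∀ e ∈ r.support, ¬ ∃ g ∈ G, A g ≤ e := by
        have hfb₀ : MvPolynomial.coeff b₀ f ≠ 0 := MvPolynomial.mem_support_iff.1 hb₀f.1
        by_cases hMs : ∃ e ∈ f.support, ∃ g ∈ G, A g ≤ e
        · obtain ⟨e₀, he₀, hd₀⟩ := hMs
          have hMsne : (f.support.filter (fun e => ∃ g ∈ G, A g ≤ e)).Nonempty :=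
            ⟨e₀, Finset.mem_filter.2 ⟨he₀, hd₀⟩⟩
          obtain ⟨b₁, hb₁Ms, hb₁max⟩ := exists_rel_max' htr htri hMsne
          refine RED b₁ f hfI' hb₀f.2 hfb₀ ?_
          intro e he hd
          rcases eq_or_ne e b₁ with rfl | hne
          · exact Or.inl rfl
          · exact Or.inr (hb₁max e (Finset.mem_filter.2 ⟨he, hd⟩) hne)
        · exact ⟨f, hfI', hfb₀, fun e he hd => hMs ⟨e, he, hd⟩⟩
      have hrne : r ≠ 0 := fun h => hrb₀ (by rw [h]; simp)
      obtain ⟨a, ha⟩ := leadExp_exists htr htri hrne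
      have hmem : (monomial a (MvPolynomial.coeff a r) : MvPolynomial (Fin n) K) ∈
          leadTermIdeal (ltW w lt) I :=
        Ideal.subset_span ⟨r, hrI, hrne, a, ha, rfl⟩
      rw [hM2] at hmem
      have hasupp : a ∈ (monomial a (MvPolynomial.coeff a r) :
          MvPolynomial (Fin n) K).support := by
        rw [MvPolynomial.support_monomial, if_neg (MvPolynomial.mem_support_iff.1 ha.1)]
        exact Finset.mem_singleton_self a
      exact hrstd a ha.1 ((hMmem _).1 hmem a hasupp)
    · rw [hMdef]
      refine Ideal.span_le.2 ?_
      rintro m ⟨a, ⟨g, hg, rfl⟩, rfl⟩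
      show (monomial (A g)) (1 : K) ∈ initialIdeal w' I
      rw [← hcone' g hg]
      exact initialForm_mem_initialIdeal w' (hGsub hg)
end

section
/- Let I ⊆ K[x₁,…,x_r] be a homogeneous ideal and d a positive integer. Fix two weight vectors w, w' ∈ ℝ₊^r lying in the relative interiors of two distinct maximal Gröbner cones of I, with monomial initial ideals in_w(I) ≠ in_{w'}(I) in degree d, spanned by monomial bases {X^{a₁},…,X^{a_k}} and {X^{b₁},…,X^{b_k}} of (in_w I)_d and (in_{w'} I)_d respectively. Then the corresponding Plücker weights Σaᵢ and Σbᵢ are vertices of the degree-d state polytope St_d(I), and for every other weight v' in the support of the Plücker coordinate of I_d one has ⟨w, Σaᵢ⟩ > ⟨w, v'⟩. -/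
open MvPolynomial

/-- The degree-`d` Plücker support of a basis `f : Fin k → S_d` of `I_d`: the
collection of `k`-element sets `A` of exponents such that the corresponding `k × k`
minor of coefficients is nonsingular (i.e. the restricted coefficient vectors are
linearly independent). -/
def pluckerSupport {K : Type*} [Field K] {r k : ℕ}
    (f : Fin k → MvPolynomial (Fin r) K) : Set (Finset (Fin r →₀ ℕ)) :=
  {A | A.card = k ∧
    LinearIndependent K (fun j : Fin k => fun a : A => MvPolynomial.coeff (a : Fin r →₀ ℕ) (f j))}

/-- The weights (sums of exponent vectors, viewed in `ℝ^r`) occurring in the Plücker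
coordinate of `I_d`; the degree-`d` state polytope `St_d(I)` is their convex hull. -/
def stateWeights {K : Type*} [Field K] {r k : ℕ}
    (f : Fin k → MvPolynomial (Fin r) K) : Set (Fin r → ℝ) :=
  {v | ∃ A ∈ pluckerSupport f, v = fun i => ∑ a ∈ A, ((a i : ℕ) : ℝ)}
section Aux

open MvPolynomial

variable {K : Type*} [Field K] {r k : ℕ}

/-- The linear map restricting a polynomial to its coefficients on a finset of exponents. -/
noncomputable def resL (A : Finset (Fin r →₀ ℕ)) :
    MvPolynomial (Fin r) K →ₗ[K] (A → K) :=
  LinearMap.pi fun a => lcoeff K (a : Fin r →₀ ℕ)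

@[simp] lemma resL_apply (A : Finset (Fin r →₀ ℕ)) (p : MvPolynomial (Fin r) K) (a : A) :
    resL A p a = coeff (a : Fin r →₀ ℕ) p := rfl

lemma sum_wdeg_key {d : ℕ}
    {I : Ideal (MvPolynomial (Fin r) K)} {w : Fin r → ℝ}
    (hmonw : IsMonomialIdeal (initialIdeal w I))
    {f : Fin k → MvPolynomial (Fin r) K}
    (hfI : ∀ j, f j ∈ I) (hfhom : ∀ j, (f j).IsHomogeneous d)
    (hfind : LinearIndependent K f)
    {A : Finset (Fin r →₀ ℕ)} (hAcard : A.card = k)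
    (hAspan : ∀ g ∈ initialIdeal w I, MvPolynomial.IsHomogeneous g d →
      g ∈ Submodule.span K ((fun a => (monomial a (1 : K) : MvPolynomial (Fin r) K)) '' A)) :
    A ∈ pluckerSupport f ∧
      ∀ A' ∈ pluckerSupport f, A' ≠ A →
        ∑ b ∈ A', wdeg w b < ∑ a ∈ A, wdeg w a := by
  classical
  set S : Submodule K (MvPolynomial (Fin r) K) := Submodule.span K (Set.range f) with hS
  have hSI : ∀ g ∈ S, g ∈ I := by
    intro g hg
    have h : S ≤ Submodule.restrictScalars K I := by
      rw [hS, Submodule.span_le]; rintro _ ⟨j, rfl⟩; exact hfI j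
    exact h hg
  have hShom : ∀ g ∈ S, g.IsHomogeneous d := by
    intro g hg
    have h : S ≤ homogeneousSubmodule (Fin r) K d := by
      rw [hS, Submodule.span_le]; rintro _ ⟨j, rfl⟩; exact hfhom j
    exact h hg
  -- Fact 1 : maximal-weight exponents of elements of I_d lie in A
  have fact1 : ∀ g ∈ I, g.IsHomogeneous d → ∀ b ∈ g.support,
      (∀ c ∈ g.support, wdeg w c ≤ wdeg w b) → b ∈ A := by
    intro g hg hgh b hb hbmax
    obtain ⟨S0, hS0⟩ := hmonw
    have hin : initialForm w g ∈ initialIdeal w I := Ideal.subset_span ⟨g, hg, rfl⟩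
    have hmemfil : b ∈ g.support.filter (fun a => ∀ c ∈ g.support, wdeg w c ≤ wdeg w a) :=
      Finset.mem_filter.mpr ⟨hb, hbmax⟩
    have hco : coeff b (initialForm w g) = coeff b g := by
      rw [initialForm, coeff_sum]
      simp only [coeff_monomial]
      rw [Finset.sum_ite_eq' _ b (fun a => coeff a g)]
      exact if_pos hmemfil
    have hbsup : b ∈ (initialForm w g).support := by
      rw [mem_support_iff, hco]; exact mem_support_iff.mp hb
    rw [hS0, mem_ideal_span_monomial_image] at hin
    obtain ⟨si, hsi, hle⟩ := hin b hbsup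
    have hbI : (monomial b (1:K) : MvPolynomial (Fin r) K) ∈ initialIdeal w I := by
      rw [hS0, mem_ideal_span_monomial_image]
      intro xi hxi
      rw [support_monomial, if_neg one_ne_zero, Finset.mem_singleton] at hxi
      exact ⟨si, hsi, hxi ▸ hle⟩
    have hdeg : (monomial b (1:K) : MvPolynomial (Fin r) K).IsHomogeneous d := by
      apply isHomogeneous_monomial
      rw [Finsupp.degree_eq_weight_one]
      exact hgh (mem_support_iff.mp hb)
    have hsp := hAspan _ hbI hdeg
    by_contra hbA
    have hker : Submodule.span K ((fun a => (monomial a (1:K) : MvPolynomial (Fin r) K)) '' ↑A)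
        ≤ LinearMap.ker (lcoeff K b) := by
      rw [Submodule.span_le]
      rintro _ ⟨a, ha, rfl⟩
      simp only [SetLike.mem_coe, LinearMap.mem_ker, lcoeff_apply, coeff_monomial]
      rw [if_neg]; rintro rfl; exact hbA ha
    have h0 := hker hsp
    simp only [LinearMap.mem_ker, lcoeff_apply, coeff_monomial, if_pos rfl] at h0
    exact one_ne_zero h0
  -- injectivity of the A-restriction on S
  have hinjA : ∀ g ∈ S, (∀ a ∈ A, coeff a g = 0) → g = 0 := by
    intro g hgS hcoeff
    by_contra hg0
    have hne : g.support.Nonempty := Finset.nonempty_iff_ne_empty.mpr (by rwa [Ne, MvPolynomial.support_eq_empty])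
    obtain ⟨b, hb, hbmax⟩ := g.support.exists_max_image (wdeg w) hne
    have hbA := fact1 g (hSI g hgS) (hShom g hgS) b hb hbmax
    exact mem_support_iff.mp hb (hcoeff b hbA)
  have hdisjA : Disjoint S (LinearMap.ker (resL (K := K) A)) := by
    rw [Submodule.disjoint_def]
    intro g hgS hker
    refine hinjA g hgS fun a ha => ?_
    rw [LinearMap.mem_ker] at hker
    exact congrFun hker ⟨a, ha⟩
  have hApluck : A ∈ pluckerSupport f := by
    refine ⟨hAcard, ?_⟩
    have := hfind.map (f := resL (K := K) A) (by rwa [← hS])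
    exact this
  refine ⟨hApluck, ?_⟩
  -- construct the diagonal basis g
  haveI : FiniteDimensional K S := FiniteDimensional.span_of_finite K (Set.finite_range f)
  have hfrS : Module.finrank K S = k := by
    rw [hS, finrank_span_eq_card hfind, Fintype.card_fin]
  let Φ : S →ₗ[K] (A → K) := (resL (K := K) A).domRestrict S
  have hΦinj : Function.Injective Φ := by
    rw [← LinearMap.ker_eq_bot, LinearMap.ker_eq_bot']
    intro m hm
    have h0 : (m : MvPolynomial (Fin r) K) = 0 := by
      refine hinjA m.1 m.2 fun a ha => ?_
      exact congrFun hm ⟨a, ha⟩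
    exact Subtype.ext h0
  have hΦsurj : Function.Surjective Φ := by
    refine (LinearMap.injective_iff_surjective_of_finrank_eq_finrank ?_).mp hΦinj
    rw [hfrS, Module.finrank_pi, Fintype.card_coe, hAcard]
  -- diagonal basis
  let gS : A → S := fun a => Function.surjInv hΦsurj (Pi.single a 1)
  let gp : A → MvPolynomial (Fin r) K := fun a => (gS a : MvPolynomial (Fin r) K)
  have hgS : ∀ a, gp a ∈ S := fun a => (gS a).2
  have hgcoeff : ∀ (a a' : A), coeff (a' : Fin r →₀ ℕ) (gp a) = if a' = a then 1 else 0 := by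
    intro a a'
    have h1 : Φ (gS a) = Pi.single a 1 := Function.surjInv_eq hΦsurj _
    have := congrFun h1 a'
    rw [Pi.single_apply] at this
    exact this
  -- support estimates for the diagonal basis
  have hub : ∀ (a : A), ∀ b ∈ (gp a).support,
      wdeg w b ≤ wdeg w (a : Fin r →₀ ℕ) ∧ (b ≠ (a : Fin r →₀ ℕ) → wdeg w b < wdeg w (a : Fin r →₀ ℕ)) := by
    intro a
    have hne : (gp a).support.Nonempty := by
      refine ⟨a, mem_support_iff.mpr ?_⟩
      rw [hgcoeff a a, if_pos rfl]; exact one_ne_zero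
    obtain ⟨b₀, hb₀, hb₀max⟩ := (gp a).support.exists_max_image (wdeg w) hne
    have hb₀A : b₀ ∈ A := fact1 _ (hSI _ (hgS a)) (hShom _ (hgS a)) b₀ hb₀ hb₀max
    have hb₀a : b₀ = (a : Fin r →₀ ℕ) := by
      have := hgcoeff a ⟨b₀, hb₀A⟩
      by_contra hne'
      rw [if_neg (fun h => hne' (congrArg Subtype.val h))] at this
      exact mem_support_iff.mp hb₀ this
    subst hb₀a
    intro b hb
    refine ⟨hb₀max b hb, fun hne' => ?_⟩
    rcases lt_or_eq_of_le (hb₀max b hb) with h | h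
    · exact h
    · exfalso
      have hbmax : ∀ c ∈ (gp a).support, wdeg w c ≤ wdeg w b := fun c hc => h ▸ hb₀max c hc
      have hbA : b ∈ A := fact1 _ (hSI _ (hgS a)) (hShom _ (hgS a)) b hb hbmax
      have := hgcoeff a ⟨b, hbA⟩
      rw [if_neg (fun h' => hne' (congrArg Subtype.val h'))] at this
      exact mem_support_iff.mp hb this
  -- linear independence of gp
  have hgpind : LinearIndependent K gp := by
    have h1 : LinearIndependent K (fun a : A => Pi.single a (1 : K)) := by
      have := (Pi.basisFun K A).linearIndependent
      simpa only [funext (Pi.basisFun_apply K A)] using this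
    have h2 : LinearIndependent K gS := by
      refine LinearIndependent.of_comp Φ ?_
      have : (Φ ∘ gS) = fun a : A => Pi.single a (1 : K) := by
        funext a; exact Function.surjInv_eq hΦsurj _
      rwa [this]
    exact h2.map' S.subtype (Submodule.ker_subtype S)
  -- main inequality
  rintro A' ⟨hA'card, hA'ind⟩ hne
  have hinjA' : ∀ g ∈ S, resL (K := K) A' g = 0 → g = 0 := by
    intro g hgS' hker
    rw [hS, Submodule.mem_span_range_iff_exists_fun] at hgS'
    obtain ⟨c, rfl⟩ := hgS'
    have h0 : ∑ j, c j • (fun a : A' => coeff (a : Fin r →₀ ℕ) (f j)) = 0 := by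
      rw [← hker, map_sum]
      refine Finset.sum_congr rfl fun j _ => ?_
      rw [map_smul]
      rfl
    have hc := Fintype.linearIndependent_iff.mp hA'ind c h0
    simp [hc]
  have hdisjA' : Disjoint (Submodule.span K (Set.range gp)) (LinearMap.ker (resL (K := K) A')) := by
    refine Disjoint.mono_left ?_ (Submodule.disjoint_def.mpr hinjA')
    rw [Submodule.span_le]
    rintro _ ⟨a, rfl⟩
    exact hgS a
  have hgpA'ind : LinearIndependent K (fun a : A => resL (K := K) A' (gp a)) :=
    hgpind.map hdisjA'
  -- matrix and permutation
  have hcardA : Fintype.card A = k := by rw [Fintype.card_coe, hAcard]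
  have hcardA' : Fintype.card A' = k := by rw [Fintype.card_coe, hA'card]
  let eA : A ≃ Fin k := Fintype.equivFinOfCardEq hcardA
  let eB : A' ≃ Fin k := Fintype.equivFinOfCardEq hcardA'
  let M : Matrix (Fin k) (Fin k) K :=
    fun i j => coeff ((eB.symm j : A') : Fin r →₀ ℕ) (gp (eA.symm i))
  have hdet : M.det ≠ 0 := by
    intro hdet0
    obtain ⟨v, hv0, hvM⟩ := Matrix.exists_vecMul_eq_zero_iff.mpr hdet0
    have hind2 : LinearIndependent K (fun i : Fin k => resL (K := K) A' (gp (eA.symm i))) :=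
      hgpA'ind.comp eA.symm eA.symm.injective
    have h0 : ∑ i, v i • resL (K := K) A' (gp (eA.symm i)) = 0 := by
      funext a'
      have := congrFun hvM (eB a')
      simp only [Matrix.vecMul, dotProduct, M, Equiv.symm_apply_apply] at this
      simpa [Finset.sum_apply, smul_eq_mul] using this
    exact hv0 (funext fun i => Fintype.linearIndependent_iff.mp hind2 v h0 i)
  have hperm : ∃ σ : Equiv.Perm (Fin k), ∀ i, M (σ i) i ≠ 0 := by
    by_contra hcon
    push_neg at hcon
    apply hdet
    rw [Matrix.det_apply]
    refine Finset.sum_eq_zero fun σ _ => ?_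
    obtain ⟨i, hi⟩ := hcon σ
    rw [Finset.prod_eq_zero (f := fun x => M (σ x) x) (Finset.mem_univ i) hi]
    simp
  obtain ⟨σ, hσ⟩ := hperm
  -- termwise comparison
  have hterm : ∀ i : Fin k, wdeg w ((eB.symm i : A') : Fin r →₀ ℕ) ≤
      wdeg w ((eA.symm (σ i) : A) : Fin r →₀ ℕ) ∧
      (((eB.symm i : A') : Fin r →₀ ℕ) ≠ ((eA.symm (σ i) : A) : Fin r →₀ ℕ) →
        wdeg w ((eB.symm i : A') : Fin r →₀ ℕ) < wdeg w ((eA.symm (σ i) : A) : Fin r →₀ ℕ)) := by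
    intro i
    have hsup : ((eB.symm i : A') : Fin r →₀ ℕ) ∈ (gp (eA.symm (σ i))).support :=
      mem_support_iff.mpr (hσ i)
    exact hub _ _ hsup
  have hsumA : ∑ a ∈ A, wdeg w a = ∑ i : Fin k, wdeg w ((eA.symm (σ i) : A) : Fin r →₀ ℕ) := by
    rw [← Finset.sum_coe_sort A (wdeg w)]
    rw [← Equiv.sum_comp (σ.trans eA.symm) (fun a : A => wdeg w (a : Fin r →₀ ℕ))]
    rfl
  have hsumA' : ∑ b ∈ A', wdeg w b = ∑ i : Fin k, wdeg w ((eB.symm i : A') : Fin r →₀ ℕ) := by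
    rw [← Finset.sum_coe_sort A' (wdeg w)]
    rw [← Equiv.sum_comp eB.symm (fun b : A' => wdeg w (b : Fin r →₀ ℕ))]
  rw [hsumA, hsumA']
  -- strictness
  have hstrict : ∃ i : Fin k, ((eB.symm i : A') : Fin r →₀ ℕ) ≠ ((eA.symm (σ i) : A) : Fin r →₀ ℕ) := by
    by_contra hall
    push_neg at hall
    apply hne
    have hsub : A' ⊆ A := by
      intro b hb
      have : b = ((eB.symm (eB ⟨b, hb⟩) : A') : Fin r →₀ ℕ) := by rw [Equiv.symm_apply_apply]
      rw [this, hall (eB ⟨b, hb⟩)]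
      exact (eA.symm (σ (eB ⟨b, hb⟩))).2
    exact Finset.eq_of_subset_of_card_le hsub (by rw [hAcard, hA'card])
  obtain ⟨i₀, hi₀⟩ := hstrict
  refine Finset.sum_lt_sum (fun i _ => (hterm i).1) ⟨i₀, Finset.mem_univ i₀, (hterm i₀).2 hi₀⟩

end Aux

/-- Let `I` be a homogeneous ideal, `f` a basis of `I_d`, and let `w, w'` be nonnegative
weight vectors with distinct monomial initial ideals in degree `d`, with monomial bases
of `(in_w I)_d`, `(in_{w'} I)_d` given by exponent sets `A`, `B`.  Then the Plücker
weights `Σ_{a∈A} a` and `Σ_{b∈B} b` are vertices of the degree-`d` state polytope, and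
the `w`-pairing with `Σ_{a∈A} a` strictly exceeds that with every other state weight. -/
theorem stmt17 {K : Type*} [Field K] {r k : ℕ} (d : ℕ)
    (I : Ideal (MvPolynomial (Fin r) K))
    (hIhom : ∀ g ∈ I, ∀ e : ℕ, MvPolynomial.homogeneousComponent e g ∈ I)
    (w w' : Fin r → ℝ) (hw : ∀ i, 0 ≤ w i) (hw' : ∀ i, 0 ≤ w' i)
    (hmonw : IsMonomialIdeal (initialIdeal w I))
    (hmonw' : IsMonomialIdeal (initialIdeal w' I))
    (f : Fin k → MvPolynomial (Fin r) K)
    (hfI : ∀ j, f j ∈ I) (hfhom : ∀ j, (f j).IsHomogeneous d)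
    (hfind : LinearIndependent K f)
    (hfspan : ∀ g ∈ I, g.IsHomogeneous d → g ∈ Submodule.span K (Set.range f))
    (A B : Finset (Fin r →₀ ℕ)) (hAcard : A.card = k) (hBcard : B.card = k)
    (hA : ∀ a ∈ A, (monomial a (1 : K)).IsHomogeneous d ∧
      (monomial a (1 : K) : MvPolynomial (Fin r) K) ∈ initialIdeal w I)
    (hAspan : ∀ g ∈ initialIdeal w I, MvPolynomial.IsHomogeneous g d →
      g ∈ Submodule.span K ((fun a => (monomial a (1 : K) : MvPolynomial (Fin r) K)) '' A))
    (hB : ∀ b ∈ B, (monomial b (1 : K)).IsHomogeneous d ∧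
      (monomial b (1 : K) : MvPolynomial (Fin r) K) ∈ initialIdeal w' I)
    (hBspan : ∀ g ∈ initialIdeal w' I, MvPolynomial.IsHomogeneous g d →
      g ∈ Submodule.span K ((fun b => (monomial b (1 : K) : MvPolynomial (Fin r) K)) '' B))
    (hAB : A ≠ B) :
    (fun i => ∑ a ∈ A, ((a i : ℕ) : ℝ)) ∈ stateWeights f ∧
    (fun i => ∑ a ∈ A, ((a i : ℕ) : ℝ)) ∉
      convexHull ℝ (stateWeights f \ {fun i => ∑ a ∈ A, ((a i : ℕ) : ℝ)}) ∧
    (fun i => ∑ b ∈ B, ((b i : ℕ) : ℝ)) ∈ stateWeights f ∧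
    (fun i => ∑ b ∈ B, ((b i : ℕ) : ℝ)) ∉
      convexHull ℝ (stateWeights f \ {fun i => ∑ b ∈ B, ((b i : ℕ) : ℝ)}) ∧
    ∀ v' ∈ stateWeights f, v' ≠ (fun i => ∑ a ∈ A, ((a i : ℕ) : ℝ)) →
      (∑ i, w i * v' i) < ∑ i, w i * ∑ a ∈ A, ((a i : ℕ) : ℝ) := by
  classical
  obtain ⟨hApluck, hAmax⟩ := sum_wdeg_key hmonw hfI hfhom hfind hAcard hAspan
  obtain ⟨hBpluck, hBmax⟩ := sum_wdeg_key hmonw' hfI hfhom hfind hBcard hBspan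
  have pair : ∀ (u : Fin r → ℝ) (C : Finset (Fin r →₀ ℕ)),
      ∑ i, u i * (∑ a ∈ C, ((a i : ℕ) : ℝ)) = ∑ a ∈ C, wdeg u a := by
    intro u C
    simp_rw [Finset.mul_sum]
    rw [Finset.sum_comm]
    rfl
  have strictA : ∀ v' ∈ stateWeights f, v' ≠ (fun i => ∑ a ∈ A, ((a i : ℕ) : ℝ)) →
      (∑ i, w i * v' i) < ∑ i, w i * ∑ a ∈ A, ((a i : ℕ) : ℝ) := by
    rintro v' ⟨A', hA', rfl⟩ hne
    have hAA' : A' ≠ A := by rintro rfl; exact hne rfl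
    calc (∑ i, w i * ∑ a ∈ A', ((a i : ℕ) : ℝ)) = ∑ a ∈ A', wdeg w a := pair w A'
      _ < ∑ a ∈ A, wdeg w a := hAmax A' hA' hAA'
      _ = ∑ i, w i * ∑ a ∈ A, ((a i : ℕ) : ℝ) := (pair w A).symm
  have strictB : ∀ v' ∈ stateWeights f, v' ≠ (fun i => ∑ b ∈ B, ((b i : ℕ) : ℝ)) →
      (∑ i, w' i * v' i) < ∑ i, w' i * ∑ b ∈ B, ((b i : ℕ) : ℝ) := by
    rintro v' ⟨B', hB', rfl⟩ hne
    have hBB' : B' ≠ B := by rintro rfl; exact hne rfl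
    calc (∑ i, w' i * ∑ a ∈ B', ((a i : ℕ) : ℝ)) = ∑ a ∈ B', wdeg w' a := pair w' B'
      _ < ∑ b ∈ B, wdeg w' b := hBmax B' hB' hBB'
      _ = ∑ i, w' i * ∑ b ∈ B, ((b i : ℕ) : ℝ) := (pair w' B).symm
  have vertex : ∀ (u : Fin r → ℝ) (x : Fin r → ℝ),
      (∀ v' ∈ stateWeights f, v' ≠ x → (∑ i, u i * v' i) < ∑ i, u i * x i) →
      x ∉ convexHull ℝ (stateWeights f \ {x}) := by
    intro u x hx hmem
    have hlin : IsLinearMap ℝ (fun z : Fin r → ℝ => ∑ i, u i * z i) := by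
      constructor
      · intro p q; simp [mul_add, Finset.sum_add_distrib]
      · intro c p; simp [Finset.mul_sum, mul_left_comm]
    have hconv : Convex ℝ {z : Fin r → ℝ | (∑ i, u i * z i) < ∑ i, u i * x i} :=
      convex_halfSpace_lt hlin _
    have hsub : stateWeights f \ {x} ⊆ {z : Fin r → ℝ | (∑ i, u i * z i) < ∑ i, u i * x i} :=
      fun z hz => hx z hz.1 hz.2
    have hcontra := convexHull_min hsub hconv hmem
    exact lt_irrefl (∑ i, u i * x i) hcontra
  exact ⟨⟨A, hApluck, rfl⟩, vertex w _ strictA, ⟨B, hBpluck, rfl⟩, vertex w' _ strictB, strictA⟩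
end
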